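/- Assume Hypothesis H2, σ_ε² > 0, a ∈ (1/2, 1), q > 0, 0 < δ < q, and k_ε < na, where k_ε = Card{ i ∈ {1,…,n} : (Πy)ᵢ/√(Πᵢᵢ) ≤ σ_ε q }. Then the solution set H = { σ² ∈ [0,∞) : ψ⁺_δ(σ²) = a } is a nonempty compact subset of [0,∞); in particular it contains a minimal element σ²_opt = min H. -/

import Mathlib

open Matrix

/-- The matrix `K̄ = K⁻¹ − K⁻¹F(FᵀK⁻¹F)⁻¹FᵀK⁻¹`. -/
noncomputable def Kbar {n p : ℕ} (F : Matrix (Fin n) (Fin p) ℝ)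
    (K : Matrix (Fin n) (Fin n) ℝ) : Matrix (Fin n) (Fin n) ℝ :=
  K⁻¹ - K⁻¹ * F * (Fᵀ * K⁻¹ * F)⁻¹ * Fᵀ * K⁻¹

/-- `h⁺_δ(x) = 1` if `x > δ`, `x/δ` if `0 < x ≤ δ`, `0` if `x ≤ 0`. -/
noncomputable def hplus (δ x : ℝ) : ℝ :=
  if δ < x then 1 else if 0 < x then x / δ else 0

/-- `ψ⁺_δ(K) = (1/n) Σᵢ h⁺_δ(q − (K̄y)ᵢ/√(K̄ᵢᵢ))`. -/
noncomputable def psiPlus {n p : ℕ} (F : Matrix (Fin n) (Fin p) ℝ)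
    (y : Fin n → ℝ) (δ q : ℝ) (K : Matrix (Fin n) (Fin n) ℝ) : ℝ :=
  (1 / n) * ∑ i, hplus δ (q - (Kbar F K *ᵥ y) i / Real.sqrt (Kbar F K i i))

variable {n p : ℕ}

lemma F_inj (F : Matrix (Fin n) (Fin p) ℝ) (hF : F.rank = p) :
    Function.Injective F.mulVecLin := by
  rw [← LinearMap.ker_eq_bot]
  have h := LinearMap.finrank_range_add_finrank_ker F.mulVecLin
  rw [Matrix.rank] at hF
  rw [hF] at h
  simp only [Module.finrank_pi, Fintype.card_fin] at h
  have : Module.finrank ℝ (LinearMap.ker F.mulVecLin) = 0 := by omega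
  exact Submodule.finrank_eq_zero.mp this

lemma M_posdef (F : Matrix (Fin n) (Fin p) ℝ) (hFinj : Function.Injective F.mulVecLin)
    {K : Matrix (Fin n) (Fin n) ℝ} (hK : K.PosDef) : (Fᵀ * K⁻¹ * F).PosDef := by
  have hKi : K⁻¹.PosDef := hK.inv
  refine Matrix.PosDef.of_dotProduct_mulVec_pos ?_ ?_
  · have hH : (K⁻¹)ᴴ = K⁻¹ := hKi.isHermitian
    show (Fᵀ * K⁻¹ * F)ᴴ = _
    rw [conjTranspose_mul, conjTranspose_mul, hH]
    simp [Matrix.mul_assoc]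
  · intro x hx
    have hFx : F *ᵥ x ≠ 0 := by
      intro h
      apply hx
      have := hFinj (a₁ := x) (a₂ := 0) (by simpa using h)
      simpa using this
    have := hKi.dotProduct_mulVec_pos hFx
    simpa [Matrix.mul_assoc, mulVec_mulVec, dotProduct_mulVec, vecMul_transpose,
      ← Matrix.vecMul_vecMul, star_trivial] using this

section KbarProps
variable (F : Matrix (Fin n) (Fin p) ℝ) {K : Matrix (Fin n) (Fin n) ℝ}
  (hFinj : Function.Injective F.mulVecLin) (hK : K.PosDef)

include hK in
lemma Kt_eq : Kᵀ = K := by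
  have := hK.isHermitian
  exact (by simpa [conjTranspose, Matrix.map_id] using this : K.IsSymm).eq

include hFinj hK in
lemma Ft_Kbar : Fᵀ * Kbar F K = 0 := by
  have hM := M_posdef F hFinj hK
  have h1 : Fᵀ * K⁻¹ * F * (Fᵀ * K⁻¹ * F)⁻¹ = 1 := Matrix.mul_nonsing_inv _ hM.det_pos.ne'.isUnit
  rw [Kbar, Matrix.mul_sub]
  simp only [← Matrix.mul_assoc]
  rw [h1, Matrix.one_mul, sub_self]

include hK in
lemma Kinv_t : (K⁻¹)ᵀ = K⁻¹ := by rw [Matrix.transpose_nonsing_inv, Kt_eq hK]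

include hFinj hK in
lemma Kbar_symm : (Kbar F K)ᵀ = Kbar F K := by
  have hM := M_posdef F hFinj hK
  have hMt : (Fᵀ * K⁻¹ * F)ᵀ = Fᵀ * K⁻¹ * F := by
    simp [transpose_mul, Kinv_t hK, Matrix.mul_assoc]
  have hMit : ((Fᵀ * K⁻¹ * F)⁻¹)ᵀ = (Fᵀ * K⁻¹ * F)⁻¹ := by
    rw [Matrix.transpose_nonsing_inv, hMt]
  simp only [Kbar, transpose_sub, transpose_mul, Kinv_t hK, hMit, transpose_transpose]
  simp [Matrix.mul_assoc]

include hFinj hK in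
lemma Kbar_F : Kbar F K * F = 0 := by
  have := congrArg Matrix.transpose (Ft_Kbar F hFinj hK)
  simpa [transpose_mul, Kbar_symm F hFinj hK] using this

include hK in
lemma K_Kbar : K * Kbar F K = 1 - F * (Fᵀ * K⁻¹ * F)⁻¹ * Fᵀ * K⁻¹ := by
  have h1 : K * K⁻¹ = 1 := Matrix.mul_nonsing_inv _ hK.det_pos.ne'.isUnit
  rw [Kbar, Matrix.mul_sub]
  simp only [← Matrix.mul_assoc]
  rw [h1, Matrix.one_mul]

include hFinj hK in
lemma Kbar_K_Kbar : Kbar F K * K * Kbar F K = Kbar F K := by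
  rw [Matrix.mul_assoc, K_Kbar F hK, Matrix.mul_sub, Matrix.mul_one]
  simp only [← Matrix.mul_assoc]
  rw [Kbar_F F hFinj hK]
  simp

include hFinj hK in
lemma Kbar_mulVec_eq_zero_iff (x : Fin n → ℝ) :
    Kbar F K *ᵥ x = 0 ↔ x ∈ LinearMap.range F.mulVecLin := by
  constructor
  · intro h
    have h2 : (K * Kbar F K) *ᵥ x = 0 := by
      rw [← Matrix.mulVec_mulVec, h, Matrix.mulVec_zero]
    rw [K_Kbar F hK, Matrix.sub_mulVec, Matrix.one_mulVec] at h2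
    have h3 := sub_eq_zero.mp h2
    refine ⟨((Fᵀ * K⁻¹ * F)⁻¹ * Fᵀ * K⁻¹) *ᵥ x, ?_⟩
    show F *ᵥ _ = x
    rw [Matrix.mulVec_mulVec]
    simp only [← Matrix.mul_assoc]
    exact h3.symm
  · rintro ⟨u, rfl⟩
    show Kbar F K *ᵥ (F *ᵥ u) = 0
    rw [Matrix.mulVec_mulVec, Kbar_F F hFinj hK, Matrix.zero_mulVec]

include hFinj hK in
lemma Kbar_diag_pos {i : Fin n} (hi : Pi.single i (1 : ℝ) ∉ LinearMap.range F.mulVecLin) :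
    0 < Kbar F K i i := by
  set v := Kbar F K *ᵥ Pi.single i (1 : ℝ) with hv
  have hvne : v ≠ 0 := fun h => hi ((Kbar_mulVec_eq_zero_iff F hFinj hK _).mp h)
  have hpos := hK.dotProduct_mulVec_pos hvne
  rw [star_trivial] at hpos
  have hsym : ∀ a b, Kbar F K a b = Kbar F K b a := fun a b => by
    conv_lhs => rw [← Kbar_symm F hFinj hK]
    rfl
  have key : Kbar F K i i = v ⬝ᵥ K *ᵥ v := by
    conv_lhs => rw [← Kbar_K_Kbar F hFinj hK]
    simp only [hv, Matrix.mulVec_single, mul_one, Matrix.mul_apply, dotProduct, Matrix.mulVec,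
      Finset.sum_mul, Finset.mul_sum, MulOpposite.op_one, one_smul, Matrix.col_apply]
    rw [Finset.sum_comm]
    refine Finset.sum_congr rfl fun j _ => Finset.sum_congr rfl fun k _ => ?_
    rw [hsym i j]
    ring
  rwa [← key] at hpos

end KbarProps

lemma smul_matrix_inv {c : ℝ} (hc : c ≠ 0) {K : Matrix (Fin n) (Fin n) ℝ} (hK : IsUnit K.det) :
    (c • K)⁻¹ = c⁻¹ • K⁻¹ := by
  letI := invertibleOfNonzero hc
  exact (Matrix.inv_smul K c hK).trans (by rw [invOf_eq_inv])

lemma Kbar_smul (F : Matrix (Fin n) (Fin p) ℝ) (hFinj : Function.Injective F.mulVecLin)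
    {c : ℝ} (hc : 0 < c) {K : Matrix (Fin n) (Fin n) ℝ} (hK : K.PosDef) :
    Kbar F (c • K) = c⁻¹ • Kbar F K := by
  have hM := M_posdef F hFinj hK
  have h1 : (c • K)⁻¹ = c⁻¹ • K⁻¹ := smul_matrix_inv hc.ne' hK.det_pos.ne'.isUnit
  rw [Kbar, Kbar, h1]
  have h2 : Fᵀ * (c⁻¹ • K⁻¹) * F = c⁻¹ • (Fᵀ * K⁻¹ * F) := by
    simp [Matrix.mul_smul, Matrix.smul_mul]
  rw [h2, smul_matrix_inv (inv_ne_zero hc.ne') hM.det_pos.ne'.isUnit, inv_inv]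
  rw [smul_sub]
  congr 1
  simp only [Matrix.mul_smul, Matrix.smul_mul, smul_smul]
  congr 1
  field_simp

lemma Kbar_one (F : Matrix (Fin n) (Fin p) ℝ) :
    Kbar F (1 : Matrix (Fin n) (Fin n) ℝ) = 1 - F * (Fᵀ * F)⁻¹ * Fᵀ := by
  simp [Kbar, inv_one]

lemma ContinuousAt.matrix_mul' {X : Type*} [TopologicalSpace X] {m k l : ℕ}
    {A : X → Matrix (Fin m) (Fin k) ℝ} {B : X → Matrix (Fin k) (Fin l) ℝ} {x : X}
    (hA : ContinuousAt A x) (hB : ContinuousAt B x) : ContinuousAt (fun x => A x * B x) x :=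
  ContinuousAt.comp (f := fun x => (A x, B x)) (g := fun q => q.1 * q.2)
    ((continuous_fst.matrix_mul continuous_snd).continuousAt) (hA.prodMk hB)

lemma inv_continuousAt {m : ℕ} {K₀ : Matrix (Fin m) (Fin m) ℝ} (h : K₀.det ≠ 0) :
    ContinuousAt Inv.inv K₀ :=
  continuousAt_matrix_inv _ (by rw [Ring.inverse_eq_inv']; exact continuousAt_inv₀ h)

lemma kbar_continuousAt (F : Matrix (Fin n) (Fin p) ℝ)
    (hFinj : Function.Injective F.mulVecLin)
    {K₀ : Matrix (Fin n) (Fin n) ℝ} (hK₀ : K₀.PosDef) :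
    ContinuousAt (Kbar F) K₀ := by
  have hi : ContinuousAt (Inv.inv : Matrix (Fin n) (Fin n) ℝ → _) K₀ :=
    inv_continuousAt hK₀.det_pos.ne'
  have hM := M_posdef F hFinj hK₀
  have hMc : ContinuousAt (fun K : Matrix (Fin n) (Fin n) ℝ => Fᵀ * K⁻¹ * F) K₀ :=
    (continuousAt_const.matrix_mul' hi).matrix_mul' continuousAt_const
  have hMinv : ContinuousAt (fun K : Matrix (Fin n) (Fin n) ℝ => (Fᵀ * K⁻¹ * F)⁻¹) K₀ :=
    ContinuousAt.comp (f := fun K : Matrix (Fin n) (Fin n) ℝ => Fᵀ * K⁻¹ * F)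
      (g := Inv.inv) (inv_continuousAt hM.det_pos.ne') hMc
  exact hi.sub ((((hi.matrix_mul' continuousAt_const).matrix_mul' hMinv).matrix_mul'
    continuousAt_const).matrix_mul' hi)

lemma hplus_eq_max {δ : ℝ} (hδ : 0 < δ) (x : ℝ) : hplus δ x = max 0 (min 1 (x / δ)) := by
  unfold hplus
  split_ifs with h1 h2
  · rw [min_eq_left (by rw [le_div_iff₀ hδ]; linarith), max_eq_right zero_le_one]
  · rw [min_eq_right (by rw [div_le_one hδ]; linarith),
      max_eq_right (le_of_lt (div_pos h2 hδ))]
  · rw [min_eq_right (by push_neg at h2; calc x/δ ≤ 0 := div_nonpos_of_nonpos_of_nonneg h2 hδ.le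
      _ ≤ 1 := zero_le_one),
      max_eq_left (by push_neg at h2; exact div_nonpos_of_nonpos_of_nonneg h2 hδ.le)]

lemma hplus_continuous {δ : ℝ} (hδ : 0 < δ) : Continuous (hplus δ) := by
  have : hplus δ = fun x => max 0 (min 1 (x / δ)) := funext (hplus_eq_max hδ)
  rw [this]
  exact continuous_const.max ((continuous_const.min (continuous_id.div_const δ)))

lemma hplus_nonneg {δ : ℝ} (hδ : 0 < δ) (x : ℝ) : 0 ≤ hplus δ x := by
  rw [hplus_eq_max hδ]; exact le_max_left _ _

lemma hplus_le_one {δ : ℝ} (hδ : 0 < δ) (x : ℝ) : hplus δ x ≤ 1 := by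
  rw [hplus_eq_max hδ]
  exact max_le (zero_le_one) (min_le_left _ _)

lemma hplus_eq_one {δ x : ℝ} (h : δ < x) : hplus δ x = 1 := if_pos h

lemma hplus_eq_zero {δ x : ℝ} (hδ : 0 < δ) (h : x ≤ 0) : hplus δ x = 0 := by
  unfold hplus
  rw [if_neg (by linarith), if_neg (by linarith)]

lemma psi_contAt (F : Matrix (Fin n) (Fin p) ℝ)
    (hFinj : Function.Injective F.mulVecLin)
    (hH2 : ∀ i : Fin n, Pi.single i (1 : ℝ) ∉ LinearMap.range (Matrix.mulVecLin F))
    (y : Fin n → ℝ) {δ q : ℝ} (hδ : 0 < δ)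
    {Kf : ℝ → Matrix (Fin n) (Fin n) ℝ} {s₀ : ℝ}
    (hc : ContinuousAt Kf s₀) (hpd : (Kf s₀).PosDef) :
    ContinuousAt (fun s => psiPlus F y δ q (Kf s)) s₀ := by
  unfold psiPlus
  apply ContinuousAt.mul continuousAt_const
  apply tendsto_finset_sum
  intro i _
  have hB : ContinuousAt (fun s => Kbar F (Kf s)) s₀ :=
    ContinuousAt.comp (g := Kbar F) (kbar_continuousAt F hFinj hpd) hc
  have hent : ∀ j : Fin n, ContinuousAt (fun s => Kbar F (Kf s) i j) s₀ := fun j =>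
    ContinuousAt.comp (g := fun A : Matrix (Fin n) (Fin n) ℝ => A i j)
      (((continuous_apply j).comp (continuous_apply i)).continuousAt) hB
  have h1 : ContinuousAt (fun s => (Kbar F (Kf s) *ᵥ y) i) s₀ := by
    simp only [Matrix.mulVec, dotProduct]
    exact tendsto_finset_sum _ fun j _ => (hent j).mul continuousAt_const
  have h2 : ContinuousAt (fun s => Real.sqrt (Kbar F (Kf s) i i)) s₀ :=
    ContinuousAt.comp (g := Real.sqrt) Real.continuous_sqrt.continuousAt (hent i)
  have h3 : Real.sqrt (Kbar F (Kf s₀) i i) ≠ 0 :=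
    (Real.sqrt_pos.mpr (Kbar_diag_pos F hFinj hpd (hH2 i))).ne'
  exact ContinuousAt.comp (g := hplus δ) (hplus_continuous hδ).continuousAt
    (continuousAt_const.sub (h1.div h2 h3))

lemma posSemidef_smul' {A : Matrix (Fin n) (Fin n) ℝ} (hA : A.PosSemidef) {s : ℝ} (hs : 0 ≤ s) :
    (s • A).PosSemidef := by
  refine Matrix.PosSemidef.of_dotProduct_mulVec_nonneg ?_ ?_
  · show (s • A)ᴴ = s • A
    rw [conjTranspose_smul, hA.1]
    simp
  · intro x
    rw [Matrix.smul_mulVec, dotProduct_smul]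
    have := hA.dotProduct_mulVec_nonneg x
    rw [star_trivial] at this ⊢
    exact mul_nonneg hs (by simpa using this)

lemma posDef_one' : (1 : Matrix (Fin n) (Fin n) ℝ).PosDef := by
  refine Matrix.PosDef.of_dotProduct_mulVec_pos ?_ ?_
  · exact Matrix.isHermitian_one
  · intro x hx
    rw [Matrix.one_mulVec, star_trivial]
    exact dotProduct_self_star_pos_iff.mpr hx |>.trans_eq (by rw [star_trivial]) |>.trans_le le_rfl

lemma posDef_smul' {A : Matrix (Fin n) (Fin n) ℝ} (hA : A.PosDef) {s : ℝ} (hs : 0 < s) :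
    (s • A).PosDef := by
  refine Matrix.PosDef.of_dotProduct_mulVec_pos ?_ ?_
  · show (s • A)ᴴ = s • A
    rw [conjTranspose_smul, hA.1]
    simp
  · intro x hx
    rw [Matrix.smul_mulVec, dotProduct_smul]
    exact mul_pos hs (hA.dotProduct_mulVec_pos hx)

lemma K_posdef' {R : Matrix (Fin n) (Fin n) ℝ} (hR : R.PosDef) {c : ℝ} (hc : 0 < c)
    {s : ℝ} (hs : 0 ≤ s) : (s • R + c • (1 : Matrix (Fin n) (Fin n) ℝ)).PosDef :=
  Matrix.PosDef.posSemidef_add (posSemidef_smul' hR.posSemidef hs) (posDef_smul' posDef_one' hc)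

lemma psi_zero_lt (F : Matrix (Fin n) (Fin p) ℝ)
    (hFinj : Function.Injective F.mulVecLin)
    (hH2 : ∀ i : Fin n, Pi.single i (1 : ℝ) ∉ LinearMap.range (Matrix.mulVecLin F))
    (y : Fin n → ℝ) {δ q sigeps a : ℝ} (hδ : 0 < δ) (hq : 0 < q) (hsig : 0 < sigeps)
    (hn : 0 < n)
    (hke : ((Finset.univ.filter fun i : Fin n =>
        (((1 : Matrix (Fin n) (Fin n) ℝ) - F * (Fᵀ * F)⁻¹ * Fᵀ) *ᵥ y) i /
          Real.sqrt (((1 : Matrix (Fin n) (Fin n) ℝ) - F * (Fᵀ * F)⁻¹ * Fᵀ) i i)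
          ≤ sigeps * q).card : ℝ) < n * a) :
    psiPlus F y δ q ((sigeps ^ 2) • (1 : Matrix (Fin n) (Fin n) ℝ)) < a := by
  set Pi0 : Matrix (Fin n) (Fin n) ℝ := 1 - F * (Fᵀ * F)⁻¹ * Fᵀ with hPi0
  have hB : Kbar F ((sigeps ^ 2) • (1 : Matrix (Fin n) (Fin n) ℝ)) = (sigeps ^ 2)⁻¹ • Pi0 := by
    rw [Kbar_smul F hFinj (by positivity) posDef_one', Kbar_one]
  have hdiag : ∀ i, 0 < Pi0 i i := by
    intro i
    have := Kbar_diag_pos F hFinj posDef_one' (hH2 i)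
    rwa [Kbar_one] at this
  have hterm : ∀ i : Fin n,
      ((Kbar F ((sigeps ^ 2) • (1 : Matrix (Fin n) (Fin n) ℝ)) *ᵥ y) i /
        Real.sqrt (Kbar F ((sigeps ^ 2) • (1 : Matrix (Fin n) (Fin n) ℝ)) i i))
      = ((Pi0 *ᵥ y) i / Real.sqrt (Pi0 i i)) / sigeps := by
    intro i
    rw [hB]
    have h1 : ((sigeps ^ 2)⁻¹ • Pi0) *ᵥ y = (sigeps ^ 2)⁻¹ • (Pi0 *ᵥ y) :=
      Matrix.smul_mulVec _ _ _
    have h2 : ((sigeps ^ 2)⁻¹ • Pi0) i i = (sigeps ^ 2)⁻¹ * Pi0 i i := rfl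
    rw [h1, h2, Real.sqrt_mul (by positivity)]
    have h3 : Real.sqrt ((sigeps ^ 2)⁻¹) = sigeps⁻¹ := by
      rw [Real.sqrt_inv, Real.sqrt_sq hsig.le]
    rw [h3]
    simp only [Pi.smul_apply, smul_eq_mul]
    have hs : Real.sqrt (Pi0 i i) ≠ 0 := (Real.sqrt_pos.mpr (hdiag i)).ne'
    field_simp
  unfold psiPlus
  have hsum : ∑ i, hplus δ (q - (Kbar F ((sigeps ^ 2) • (1 : Matrix (Fin n) (Fin n) ℝ)) *ᵥ y) i /
      Real.sqrt (Kbar F ((sigeps ^ 2) • (1 : Matrix (Fin n) (Fin n) ℝ)) i i))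
      ≤ ((Finset.univ.filter fun i : Fin n =>
        ((Pi0 *ᵥ y) i / Real.sqrt (Pi0 i i)) ≤ sigeps * q).card : ℝ) := by
    rw [← Finset.sum_boole]
    apply Finset.sum_le_sum
    intro i _
    rw [hterm i]
    by_cases hcase : ((Pi0 *ᵥ y) i / Real.sqrt (Pi0 i i)) ≤ sigeps * q
    · rw [if_pos hcase]
      exact hplus_le_one hδ _
    · rw [if_neg hcase]
      push_neg at hcase
      apply le_of_eq
      apply hplus_eq_zero hδ
      have : q < ((Pi0 *ᵥ y) i / Real.sqrt (Pi0 i i)) / sigeps := by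
        rw [lt_div_iff₀ hsig]
        linarith [hcase]
      linarith
  calc (1 / (n:ℝ)) * ∑ i, hplus δ (q - (Kbar F ((sigeps ^ 2) • (1 : Matrix (Fin n) (Fin n) ℝ)) *ᵥ y) i /
      Real.sqrt (Kbar F ((sigeps ^ 2) • (1 : Matrix (Fin n) (Fin n) ℝ)) i i))
      ≤ (1 / (n:ℝ)) * ((Finset.univ.filter fun i : Fin n =>
        ((Pi0 *ᵥ y) i / Real.sqrt (Pi0 i i)) ≤ sigeps * q).card : ℝ) := by
        apply mul_le_mul_of_nonneg_left hsum
        positivity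
    _ < a := by
        rw [div_mul_eq_mul_div, one_mul, div_lt_iff₀ (by exact_mod_cast hn)]
        linarith [hke]

lemma aux_ratio (c v g : ℝ) (hc : 0 ≤ c) (hg : 0 < g) :
    (c * v) / Real.sqrt (c * g) = Real.sqrt c * (v / Real.sqrt g) := by
  rw [Real.sqrt_mul hc]
  rcases eq_or_lt_of_le hc with h|h
  · simp [← h]
  · have hsq : Real.sqrt c ≠ 0 := (Real.sqrt_pos.mpr h).ne'
    have hgq : Real.sqrt g ≠ 0 := (Real.sqrt_pos.mpr hg).ne'
    field_simp
    nth_rewrite 1 [← Real.mul_self_sqrt hc]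
    ring

lemma psi_eventually_one (F : Matrix (Fin n) (Fin p) ℝ)
    (hFinj : Function.Injective F.mulVecLin)
    (hH2 : ∀ i : Fin n, Pi.single i (1 : ℝ) ∉ LinearMap.range (Matrix.mulVecLin F))
    (y : Fin n → ℝ) {R : Matrix (Fin n) (Fin n) ℝ} (hR : R.PosDef)
    {δ q sigeps : ℝ} (hδ : 0 < δ) (hδq : δ < q) (hsig : 0 < sigeps) (hn : 0 < n) :
    ∀ᶠ s in (Filter.atTop : Filter ℝ), psiPlus F y δ q
      (s • R + (sigeps ^ 2) • (1 : Matrix (Fin n) (Fin n) ℝ)) = 1 := by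
  set G : ℝ → Matrix (Fin n) (Fin n) ℝ := fun t => Kbar F (R + t • 1) with hG
  have hG0 : (R + (0:ℝ) • (1 : Matrix (Fin n) (Fin n) ℝ)) = R := by simp
  have hGcont : ContinuousAt G 0 := by
    apply ContinuousAt.comp (g := Kbar F)
    · rw [hG0]; exact kbar_continuousAt F hFinj hR
    · exact (continuous_const.add ((continuous_id.smul continuous_const))).continuousAt
  have hGdiag : ∀ i, 0 < G 0 i i := by
    intro i
    simp only [hG, hG0]
    exact Kbar_diag_pos F hFinj hR (hH2 i)
  -- eventual bound for each i
  have key : ∀ i : Fin n, ∀ᶠ s in (Filter.atTop : Filter ℝ),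
      hplus δ (q - (Kbar F (s • R + (sigeps ^ 2) • 1) *ᵥ y) i /
        Real.sqrt (Kbar F (s • R + (sigeps ^ 2) • 1) i i)) = 1 := by
    intro i
    have htend : Filter.Tendsto (fun s : ℝ => sigeps ^ 2 * s⁻¹) Filter.atTop (nhds 0) := by
      have := tendsto_inv_atTop_zero (𝕜 := ℝ)
      simpa using this.const_mul (sigeps ^ 2)
    have hent : ContinuousAt (fun t => G t i i) 0 :=
      ContinuousAt.comp (g := fun A : Matrix (Fin n) (Fin n) ℝ => A i i)
        (((continuous_apply i).comp (continuous_apply i)).continuousAt) hGcont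
    have hmv : ContinuousAt (fun t => (G t *ᵥ y) i) 0 := by
      simp only [Matrix.mulVec, dotProduct]
      apply tendsto_finset_sum
      intro j _
      exact (ContinuousAt.comp (g := fun A : Matrix (Fin n) (Fin n) ℝ => A i j)
        (((continuous_apply j).comp (continuous_apply i)).continuousAt) hGcont).mul
        continuousAt_const
    have hu : Filter.Tendsto (fun s : ℝ => (G (sigeps ^ 2 * s⁻¹) *ᵥ y) i /
        Real.sqrt (G (sigeps ^ 2 * s⁻¹) i i)) Filter.atTop
        (nhds ((G 0 *ᵥ y) i / Real.sqrt (G 0 i i))) := by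
      apply Filter.Tendsto.div
      · exact hmv.tendsto.comp htend
      · exact (Real.continuous_sqrt.continuousAt.comp hent).tendsto.comp htend
      · exact (Real.sqrt_pos.mpr (hGdiag i)).ne'
    have hsqrt : Filter.Tendsto (fun s : ℝ => Real.sqrt s⁻¹) Filter.atTop (nhds 0) := by
      have h2 := (Real.continuous_sqrt.tendsto (0:ℝ)).comp (tendsto_inv_atTop_zero (𝕜 := ℝ))
      rw [Real.sqrt_zero] at h2
      exact h2
    have hphi : Filter.Tendsto (fun s : ℝ => Real.sqrt s⁻¹ *
        ((G (sigeps ^ 2 * s⁻¹) *ᵥ y) i / Real.sqrt (G (sigeps ^ 2 * s⁻¹) i i)))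
        Filter.atTop (nhds 0) := by
      simpa using hsqrt.mul hu
    -- eventually the φ expression is < q - δ
    have hev : ∀ᶠ s in (Filter.atTop : Filter ℝ), Real.sqrt s⁻¹ *
        ((G (sigeps ^ 2 * s⁻¹) *ᵥ y) i / Real.sqrt (G (sigeps ^ 2 * s⁻¹) i i)) < q - δ := by
      have : Set.Iio (q - δ) ∈ nhds (0:ℝ) := Iio_mem_nhds (by linarith)
      exact hphi.eventually_mem this
    filter_upwards [hev, Filter.eventually_gt_atTop (0:ℝ)] with s hs hspos
    -- rewrite Kbar at s via scaling
    have hsne : s ≠ 0 := hspos.ne'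
    have hKs : s • R + (sigeps ^ 2) • (1 : Matrix (Fin n) (Fin n) ℝ)
        = s • (R + (sigeps ^ 2 * s⁻¹) • 1) := by
      rw [smul_add, smul_smul]
      congr 2
      field_simp
    have htpos : 0 ≤ sigeps ^ 2 * s⁻¹ := by positivity
    have hpd : (R + (sigeps ^ 2 * s⁻¹) • (1 : Matrix (Fin n) (Fin n) ℝ)).PosDef := by
      have := Matrix.PosDef.add_posSemidef hR (posSemidef_smul' (posDef_one' (n := n)).posSemidef htpos)
      exact this
    have hKbar : Kbar F (s • R + (sigeps ^ 2) • (1 : Matrix (Fin n) (Fin n) ℝ))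
        = s⁻¹ • G (sigeps ^ 2 * s⁻¹) := by
      rw [hKs, Kbar_smul F hFinj hspos hpd]
    rw [hKbar]
    apply hplus_eq_one
    have hGpos : 0 < G (sigeps ^ 2 * s⁻¹) i i := Kbar_diag_pos F hFinj hpd (hH2 i)
    have hratio : ((s⁻¹ • G (sigeps ^ 2 * s⁻¹)) *ᵥ y) i /
        Real.sqrt ((s⁻¹ • G (sigeps ^ 2 * s⁻¹)) i i)
        = Real.sqrt s⁻¹ *
          ((G (sigeps ^ 2 * s⁻¹) *ᵥ y) i / Real.sqrt (G (sigeps ^ 2 * s⁻¹) i i)) := by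
      rw [Matrix.smul_mulVec]
      have h2 : (s⁻¹ • G (sigeps ^ 2 * s⁻¹)) i i = s⁻¹ * G (sigeps ^ 2 * s⁻¹) i i := rfl
      rw [h2]
      simp only [Pi.smul_apply, smul_eq_mul]
      exact aux_ratio s⁻¹ _ _ (by positivity) hGpos
    rw [hratio]
    linarith [hs]
  have hall := (Filter.eventually_all (ι := Fin n)).mpr key
  filter_upwards [hall] with s hs
  unfold psiPlus
  rw [Finset.sum_congr rfl fun i _ => hs i]
  simp
  field_simp

/-- Lemma 6: the solution set `H = {σ² ∈ [0,∞) : ψ⁺_δ(σ²) = a}` is nonempty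
and compact; in particular it contains a minimal element `σ²_opt = min H`. -/
theorem stmt13 (n p : ℕ) (hp : 0 < p) (hpn : p < n)
    (F : Matrix (Fin n) (Fin p) ℝ) (hF : F.rank = p)
    (hH2 : ∀ i : Fin n, Pi.single i (1 : ℝ) ∉ LinearMap.range (Matrix.mulVecLin F))
    (y : Fin n → ℝ) (R : Matrix (Fin n) (Fin n) ℝ) (hR : R.PosDef)
    (sigeps : ℝ) (hsig : 0 < sigeps)
    (a : ℝ) (ha : a ∈ Set.Ioo (1 / 2 : ℝ) 1)
    (q : ℝ) (hq : 0 < q) (δ : ℝ) (hδ : 0 < δ) (hδq : δ < q)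
    (hke : ((Finset.univ.filter fun i : Fin n =>
        (((1 : Matrix (Fin n) (Fin n) ℝ) - F * (Fᵀ * F)⁻¹ * Fᵀ) *ᵥ y) i /
          Real.sqrt (((1 : Matrix (Fin n) (Fin n) ℝ) - F * (Fᵀ * F)⁻¹ * Fᵀ) i i)
          ≤ sigeps * q).card : ℝ) < n * a) :
    ({s : ℝ | s ∈ Set.Ici (0 : ℝ) ∧
        psiPlus F y δ q (s • R + (sigeps ^ 2) • (1 : Matrix (Fin n) (Fin n) ℝ)) = a}).Nonempty ∧
    IsCompact {s : ℝ | s ∈ Set.Ici (0 : ℝ) ∧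
        psiPlus F y δ q (s • R + (sigeps ^ 2) • (1 : Matrix (Fin n) (Fin n) ℝ)) = a} ∧
    ∃ m ∈ {s : ℝ | s ∈ Set.Ici (0 : ℝ) ∧
        psiPlus F y δ q (s • R + (sigeps ^ 2) • (1 : Matrix (Fin n) (Fin n) ℝ)) = a},
      ∀ s ∈ {s : ℝ | s ∈ Set.Ici (0 : ℝ) ∧
        psiPlus F y δ q (s • R + (sigeps ^ 2) • (1 : Matrix (Fin n) (Fin n) ℝ)) = a},
        m ≤ s := by
  have hn : 0 < n := hp.trans hpn
  have hFinj := F_inj F hF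
  have hsig2 : (0:ℝ) < sigeps ^ 2 := by positivity
  set g : ℝ → ℝ := fun s =>
    psiPlus F y δ q (s • R + (sigeps ^ 2) • (1 : Matrix (Fin n) (Fin n) ℝ)) with hgdef
  have hKfc : Continuous fun s : ℝ =>
      s • R + (sigeps ^ 2) • (1 : Matrix (Fin n) (Fin n) ℝ) :=
    (continuous_id.smul continuous_const).add continuous_const
  have hcontAt : ∀ s : ℝ, 0 ≤ s → ContinuousAt g s := fun s hs =>
    psi_contAt F hFinj hH2 y hδ hKfc.continuousAt (K_posdef' hR hsig2 hs)
  have hg0 : g 0 < a := by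
    have h0 : (0:ℝ) • R + (sigeps ^ 2) • (1 : Matrix (Fin n) (Fin n) ℝ)
        = (sigeps ^ 2) • (1 : Matrix (Fin n) (Fin n) ℝ) := by
      rw [zero_smul, zero_add]
    show psiPlus F y δ q _ < a
    rw [h0]
    exact psi_zero_lt F hFinj hH2 y hδ hq hsig hn hke
  obtain ⟨S₀, hS₀⟩ := Filter.eventually_atTop.mp
    (psi_eventually_one F hFinj hH2 y hR hδ hδq hsig hn)
  set S : ℝ := max S₀ 1 with hSdef
  have hSpos : (0:ℝ) ≤ S := le_trans zero_le_one (le_max_right _ _)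
  have hS1 : ∀ s : ℝ, S ≤ s → g s = 1 := fun s hs =>
    hS₀ s (le_trans (le_max_left _ _) hs)
  have hgS : g S = 1 := hS1 S le_rfl
  have hScont : ContinuousOn g (Set.Icc 0 S) := fun s hs =>
    (hcontAt s hs.1).continuousWithinAt
  have haIcc : a ∈ Set.Icc (g 0) (g S) := ⟨hg0.le, by rw [hgS]; exact ha.2.le⟩
  obtain ⟨s0, hs0Icc, hgs0⟩ := intermediate_value_Icc hSpos hScont haIcc
  set H : Set ℝ := {s : ℝ | s ∈ Set.Ici (0 : ℝ) ∧
      psiPlus F y δ q (s • R + (sigeps ^ 2) • (1 : Matrix (Fin n) (Fin n) ℝ)) = a} with hHdef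
  have hHne : H.Nonempty := ⟨s0, hs0Icc.1, hgs0⟩
  have hHeq : H = Set.Ici (0:ℝ) ∩ g ⁻¹' {a} := by
    ext s
    simp [hHdef, hgdef, Set.mem_preimage, Set.mem_inter_iff]
  have hHclosed : IsClosed H := by
    rw [hHeq]
    exact ContinuousOn.preimage_isClosed_of_isClosed
      (fun s hs => (hcontAt s hs).continuousWithinAt) isClosed_Ici isClosed_singleton
  have hHsub : H ⊆ Set.Icc 0 S := by
    rintro s ⟨hs0, hsa⟩
    refine ⟨hs0, ?_⟩
    by_contra hcon
    push_neg at hcon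
    have := hS1 s hcon.le
    rw [hgdef] at this
    simp only at this
    rw [this] at hsa
    exact absurd hsa.symm (ne_of_lt ha.2)
  have hHcompact : IsCompact H := isCompact_Icc.of_isClosed_subset hHclosed hHsub
  obtain ⟨m, hmH, hmle⟩ := hHcompact.exists_isLeast hHne
  exact ⟨hHne, hHcompact, m, hmH, hmle⟩
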